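/- Let g be a pre-Lie algebra and x, y₁, …, yₙ elements of g. Then ((…(x•y₁)•y₂)•⋯•yₙ) − ((…(y₁•y₂)•⋯•yₙ)•x) = Σ_{j=1}^n (…(y₁•y₂)•⋯•[x,yⱼ])•⋯•yₙ, i.e., the sum over j of the left-iterated product of y₁,…,yₙ with yⱼ replaced by [x,yⱼ] equals the difference of the two iterated products (telescoping identity; ungraded version). -/

import Mathlib

theorem preLie_telescoping {G : Type*} [AddCommGroup G] [Module ℚ G]
    (b : G →ₗ[ℚ] G →ₗ[ℚ] G)
    (hpl : ∀ x y z : G, b x (b y z) - b (b x y) z = b x (b z y) - b (b x z) y) :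
    ∀ (n : ℕ) (x : G) (y : Fin (n + 1) → G),
      (List.ofFn y).foldl (fun p q => b p q) x
        - b ((List.ofFn fun i : Fin n => y i.succ).foldl (fun p q => b p q) (y 0)) x
      = ∑ j : Fin (n + 1),
          (List.ofFn fun i : Fin n =>
              Function.update y j (b x (y j) - b (y j) x) i.succ).foldl
            (fun p q => b p q)
            (Function.update y j (b x (y j) - b (y j) x) 0) := by
  intro n
  induction n with
  | zero =>
    intro x y
    simp [Fin.sum_univ_one]
  | succ n ih =>
    intro x y
    set y' : Fin (n + 1) → G := fun i => y i.castSucc with hy'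
    have hlastne : ∀ j : Fin (n + 1), j.castSucc ≠ Fin.last (n + 1) :=
      fun j => (Fin.castSucc_lt_last j).ne
    have h0ne : (0 : Fin (n + 2)) ≠ Fin.last (n + 1) := by
      simp [Fin.ext_iff]
    rw [List.ofFn_succ' y, List.ofFn_succ' (fun i : Fin (n + 1) => y i.succ),
      Fin.sum_univ_castSucc]
    simp only [List.concat_eq_append, List.foldl_append, List.foldl_cons, List.foldl_nil,
      Fin.succ_castSucc, Fin.succ_last]
    have key : ∀ j : Fin (n + 1),
        (List.ofFn fun i : Fin (n + 1) =>
            Function.update y j.castSucc (b x (y j.castSucc) - b (y j.castSucc) x) i.succ).foldl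
          (fun p q => b p q)
          (Function.update y j.castSucc (b x (y j.castSucc) - b (y j.castSucc) x) 0)
        = b ((List.ofFn fun i : Fin n =>
              Function.update y' j (b x (y' j) - b (y' j) x) i.succ).foldl
            (fun p q => b p q)
            (Function.update y' j (b x (y' j) - b (y' j) x) 0)) (y (Fin.last (n + 1))) := by
      intro j
      have hupd : ∀ k : Fin (n + 1),
          Function.update y j.castSucc (b x (y j.castSucc) - b (y j.castSucc) x) k.castSucc
            = Function.update y' j (b x (y' j) - b (y' j) x) k := by
        intro k
        have := congrFun (Function.update_comp_eq_of_injective y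
          (Fin.castSucc_injective (n + 1)) j (b x (y j.castSucc) - b (y j.castSucc) x)) k
        simpa [hy', Function.comp_def] using this
      rw [List.ofFn_succ']
      simp only [List.concat_eq_append, List.foldl_append, List.foldl_cons, List.foldl_nil,
        Fin.succ_castSucc, Fin.succ_last]
      have hL : Function.update y j.castSucc (b x (y j.castSucc) - b (y j.castSucc) x)
          (Fin.last (n + 1)) = y (Fin.last (n + 1)) :=
        Function.update_of_ne (Ne.symm (hlastne j)) _ y
      have hfun : (fun i : Fin n =>
          Function.update y j.castSucc (b x (y j.castSucc) - b (y j.castSucc) x) i.succ.castSucc)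
          = fun i : Fin n => Function.update y' j (b x (y' j) - b (y' j) x) i.succ :=
        funext fun i => hupd i.succ
      have h00 : Function.update y j.castSucc (b x (y j.castSucc) - b (y j.castSucc) x) 0
          = Function.update y' j (b x (y' j) - b (y' j) x) 0 := by
        simpa using hupd 0
      rw [hL, hfun, h00]
    simp only [key]
    have hlast :
        (List.ofFn fun i : Fin (n + 1) =>
            Function.update y (Fin.last (n + 1))
              (b x (y (Fin.last (n + 1))) - b (y (Fin.last (n + 1))) x) i.succ).foldl
          (fun p q => b p q)
          (Function.update y (Fin.last (n + 1))
            (b x (y (Fin.last (n + 1))) - b (y (Fin.last (n + 1))) x) 0)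
        = b ((List.ofFn fun i : Fin n => y i.succ.castSucc).foldl (fun p q => b p q) (y 0))
            (b x (y (Fin.last (n + 1))) - b (y (Fin.last (n + 1))) x) := by
      rw [List.ofFn_succ']
      simp only [List.concat_eq_append, List.foldl_append, List.foldl_cons, List.foldl_nil,
        Fin.succ_castSucc, Fin.succ_last]
      have hfun : (fun i : Fin n =>
          Function.update y (Fin.last (n + 1))
            (b x (y (Fin.last (n + 1))) - b (y (Fin.last (n + 1))) x) i.succ.castSucc)
          = fun i : Fin n => y i.succ.castSucc :=
        funext fun i => Function.update_of_ne (hlastne i.succ) _ y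
      rw [Function.update_self, Function.update_of_ne h0ne, hfun]
    rw [hlast]
    have hsum : ∀ S : Fin (n + 1) → G,
        ∑ j : Fin (n + 1), b (S j) (y (Fin.last (n + 1)))
          = b (∑ j : Fin (n + 1), S j) (y (Fin.last (n + 1))) := by
      intro S
      simp only [← LinearMap.flip_apply (f := b) _ (y (Fin.last (n + 1))), ← map_sum]
    rw [hsum]
    have hih := ih x y'
    simp only [hy'] at hih ⊢
    rw [← hih]
    simp only [Fin.castSucc_zero]
    set B := (List.ofFn fun i : Fin n => y i.succ.castSucc).foldl (fun p q => b p q) (y 0) with hB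
    set A := (List.ofFn fun i : Fin (n + 1) => y i.castSucc).foldl (fun p q => b p q) x with hA
    set yL := y (Fin.last (n + 1)) with hyL
    have h := hpl B x yL
    simp only [map_sub, LinearMap.sub_apply]
    rw [sub_eq_sub_iff_sub_eq_sub] at h
    rw [h]
    abel
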